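/- Let k ∈ ℕ with k ≥ 1 and let d > 0. Then there exist N > 0 and R > exp^∘k(0) such that for every ζ ∈ ℂ with Re(ζ) ≥ R and |Im(ζ)| ≤ d·Re(ζ), the iterated principal logarithms L₁(ζ), …, L_k(ζ) are well defined and |L_k(ζ)| ≤ N · log^∘k(Re(ζ)). -/

import Mathlib

open Filter Set

private lemma le_expIter (j : ℕ) (x : ℝ) : x ≤ Real.exp^[j] x := by
  induction j generalizing x with
  | zero => simp
  | succ n ih =>
    rw [Function.iterate_succ_apply]
    exact le_trans (by linarith [Real.add_one_le_exp x]) (ih (Real.exp x))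

private lemma expIter_lt_expIter (j : ℕ) {x y : ℝ} (h : x < y) :
    Real.exp^[j] x < Real.exp^[j] y := by
  induction j with
  | zero => simpa
  | succ n ih =>
    rw [Function.iterate_succ_apply', Function.iterate_succ_apply']
    exact Real.exp_lt_exp.2 ih

private lemma cabs_le_of_sq (z : ℂ) {b : ℝ} (hb : 0 ≤ b)
    (h : z.re ^ 2 + z.im ^ 2 ≤ b ^ 2) : ‖z‖ ≤ b := by
  rw [Complex.norm_def, Complex.normSq_apply]
  calc Real.sqrt (z.re * z.re + z.im * z.im) ≤ Real.sqrt (b ^ 2) := by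
        apply Real.sqrt_le_sqrt; nlinarith
    _ = b := Real.sqrt_sq hb

theorem iterated_complex_log_abs_upper_bound
    (k : ℕ) (hk : 1 ≤ k) (d : ℝ) (hd : 0 < d) :
    ∃ N > (0 : ℝ), ∃ R : ℝ, Real.exp^[k] 0 < R ∧
      ∀ ζ : ℂ, R ≤ ζ.re → |ζ.im| ≤ d * ζ.re →
        (∀ m < k, 0 < (Complex.log^[m] ζ).re) ∧
        ‖Complex.log^[k] ζ‖ ≤ N * Real.log^[k] ζ.re := by
  have hπ3 : (3 : ℝ) ≤ Real.pi := Real.pi_gt_three.le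
  have hj4 : ∀ j, 1 ≤ j → (4 : ℝ) ≤ Real.exp^[j] Real.pi := by
    intro j hj
    obtain ⟨i, rfl⟩ := Nat.exists_eq_add_of_le hj
    rw [add_comm, Function.iterate_add_apply]
    refine le_trans ?_ (le_expIter i _)
    simp only [Function.iterate_one]
    linarith [Real.add_one_le_exp Real.pi]
  have hjπ : ∀ j, Real.pi ≤ Real.exp^[j] Real.pi := fun j => le_expIter j _
  have hsqrt2 : Real.sqrt 2 ≤ 3 / 2 := by
    nlinarith [Real.sq_sqrt (by norm_num : (2:ℝ) ≥ 0), Real.sqrt_nonneg 2]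
  refine ⟨3, by norm_num, max (Real.exp^[k] Real.pi) (1 + d ^ 2), ?_, ?_⟩
  · exact lt_of_lt_of_le (expIter_lt_expIter k Real.pi_pos) (le_max_left _ _)
  intro ζ hre him
  have hζexp : Real.exp^[k] Real.pi ≤ ζ.re := le_trans (le_max_left _ _) hre
  have hζd : 1 + d ^ 2 ≤ ζ.re := le_trans (le_max_right _ _) hre
  have hζ4 : (4 : ℝ) ≤ ζ.re := le_trans (hj4 k hk) hζexp
  have hζpos : 0 < ζ.re := by linarith
  have him2 : ζ.im ^ 2 ≤ d ^ 2 * ζ.re ^ 2 := by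
    nlinarith [abs_nonneg ζ.im, sq_abs ζ.im]
  -- one step lemma: from a point w with π ≤ some lower bound etc.
  have step : ∀ (w : ℂ) (X E : ℝ), Real.exp E ≤ X → Real.pi ≤ E → X ≤ w.re →
      ‖w‖ ≤ X ^ 2 →
      (E ≤ Real.log X ∧ Real.log X ≤ (Complex.log w).re ∧
        (Complex.log w).re ≤ 2 * Real.log X ∧
        ‖Complex.log w‖ ≤ Real.sqrt 2 * (Complex.log w).re) := by
    intro w X E hEX hπE hXw habs
    have hXpos : 0 < X := lt_of_lt_of_le (Real.exp_pos E) hEX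
    have hwpos : 0 < w.re := lt_of_lt_of_le hXpos hXw
    have habs_lb : w.re ≤ ‖w‖ := Complex.re_le_norm w
    have habs_pos : 0 < ‖w‖ := lt_of_lt_of_le hwpos habs_lb
    have h1 : E ≤ Real.log X := by
      calc E = Real.log (Real.exp E) := (Real.log_exp E).symm
        _ ≤ Real.log X := Real.log_le_log (Real.exp_pos E) hEX
    have h2 : Real.log X ≤ (Complex.log w).re := by
      rw [Complex.log_re]
      exact Real.log_le_log hXpos (le_trans hXw habs_lb)
    have h3 : (Complex.log w).re ≤ 2 * Real.log X := by
      rw [Complex.log_re]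
      calc Real.log (‖w‖) ≤ Real.log (X ^ 2) :=
            Real.log_le_log habs_pos habs
        _ = 2 * Real.log X := by rw [Real.log_pow]; push_cast; ring
    have hπre : Real.pi ≤ (Complex.log w).re := le_trans hπE (le_trans h1 h2)
    have h4 : ‖Complex.log w‖ ≤ Real.sqrt 2 * (Complex.log w).re := by
      apply cabs_le_of_sq
      · exact mul_nonneg (Real.sqrt_nonneg 2) (le_trans Real.pi_pos.le hπre)
      · have him2 : (Complex.log w).im ^ 2 ≤ Real.pi ^ 2 := by
          rw [Complex.log_im]
          nlinarith [Complex.abs_arg_le_pi w, abs_nonneg w.arg, sq_abs w.arg, Real.pi_pos]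
        have hs : (Real.sqrt 2 * (Complex.log w).re) ^ 2 = 2 * (Complex.log w).re ^ 2 := by
          rw [mul_pow, Real.sq_sqrt (by norm_num : (0:ℝ) ≤ 2)]
        rw [hs]
        nlinarith [Real.pi_pos]
    exact ⟨h1, h2, h3, h4⟩
  have key : ∀ m, 1 ≤ m → m ≤ k →
      Real.exp^[k - m] Real.pi ≤ Real.log^[m] ζ.re ∧
      Real.log^[m] ζ.re ≤ (Complex.log^[m] ζ).re ∧
      (Complex.log^[m] ζ).re ≤ 2 * Real.log^[m] ζ.re ∧
      ‖Complex.log^[m] ζ‖ ≤ Real.sqrt 2 * (Complex.log^[m] ζ).re := by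
    intro m hm
    induction m, hm using Nat.le_induction with
    | base =>
      intro _
      have habs : ‖ζ‖ ≤ ζ.re ^ 2 := by
        apply cabs_le_of_sq ζ (by positivity)
        have h1 : (1 + d ^ 2) * ζ.re ^ 2 ≤ ζ.re * ζ.re ^ 2 :=
          mul_le_mul_of_nonneg_right hζd (sq_nonneg ζ.re)
        nlinarith
      have hexp : Real.exp (Real.exp^[k - 1] Real.pi) ≤ ζ.re := by
        rw [← Function.iterate_succ_apply' Real.exp (k - 1) Real.pi]
        have hkk : k - 1 + 1 = k := by omega
        simp only [Nat.succ_eq_add_one, hkk]; exact hζexp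
      simpa using step ζ ζ.re (Real.exp^[k - 1] Real.pi) hexp (hjπ _) le_rfl habs
    | succ m hm1 ih =>
      intro hmk
      obtain ⟨ha, hb, hc, hd4⟩ := ih (by omega)
      set X := Real.log^[m] ζ.re with hX
      set w := Complex.log^[m] ζ with hw
      have hX4 : (4 : ℝ) ≤ X := le_trans (hj4 (k - m) (by omega)) ha
      have hwre : ‖w‖ ≤ X ^ 2 := by
        have hwnn : 0 ≤ w.re := le_trans (by linarith) hb
        have h1 : Real.sqrt 2 * w.re ≤ (3 / 2) * w.re :=
          mul_le_mul_of_nonneg_right hsqrt2 hwnn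
        calc ‖w‖ ≤ Real.sqrt 2 * w.re := hd4
          _ ≤ (3 / 2) * w.re := h1
          _ ≤ (3 / 2) * (2 * X) := by nlinarith
          _ ≤ X ^ 2 := by nlinarith
      have hEX : Real.exp (Real.exp^[k - (m + 1)] Real.pi) ≤ X := by
        refine le_trans ?_ ha
        rw [← Function.iterate_succ_apply' Real.exp (k - (m + 1)) Real.pi]
        have hkm : k - (m + 1) + 1 = k - m := by omega
        simp only [Nat.succ_eq_add_one, hkm]
        exact le_rfl
      have := step w X (Real.exp^[k - (m + 1)] Real.pi) hEX (hjπ _) hb hwre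
      rw [Function.iterate_succ_apply', Function.iterate_succ_apply']
      exact this
  constructor
  · intro m hmk
    rcases Nat.eq_zero_or_pos m with rfl | hm1
    · simpa using hζpos
    · obtain ⟨ha, hb, _, _⟩ := key m hm1 hmk.le
      have := hjπ (k - m)
      calc (0:ℝ) < Real.pi := Real.pi_pos
        _ ≤ Real.log^[m] ζ.re := le_trans (hjπ _) ha
        _ ≤ _ := hb
  · obtain ⟨ha, hb, hc, hd4⟩ := key k hk le_rfl
    have hXpos : 0 < Real.log^[k] ζ.re :=
      lt_of_lt_of_le Real.pi_pos (le_trans (hjπ _) ha)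
    have h1 : Real.sqrt 2 * (Complex.log^[k] ζ).re ≤ Real.sqrt 2 * (2 * Real.log^[k] ζ.re) :=
      mul_le_mul_of_nonneg_left hc (Real.sqrt_nonneg 2)
    have h2 : Real.sqrt 2 * (2 * Real.log^[k] ζ.re) ≤ (3 / 2) * (2 * Real.log^[k] ζ.re) :=
      mul_le_mul_of_nonneg_right hsqrt2 (by linarith)
    calc ‖Complex.log^[k] ζ‖ ≤ Real.sqrt 2 * (Complex.log^[k] ζ).re := hd4
      _ ≤ Real.sqrt 2 * (2 * Real.log^[k] ζ.re) := h1
      _ ≤ 3 * Real.log^[k] ζ.re := by linarith
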